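/- Let Ψ be a 4-index tensor on ℝ⁸ satisfying: Ψ_{abcd} is antisymmetric in a,b and in c,d, symmetric under the pair exchange (ab)↔(cd), trace-free (Ψ_{abab} = 0, summed over a,b), and Λ²₇-valued in each index pair (½ Φ_{ab}{}^{pq} Ψ_{pqcd} = −3 Ψ_{abcd} and ½ Φ_{cd}{}^{pq} Ψ_{abpq} = −3 Ψ_{abcd}). Define the 4-form (ΨΦ)_{abcd} = Ψ_{[ab}{}^{pq} Φ_{cd]pq}, where [⋯] denotes antisymmetrization with weight 1/4! over a,b,c,d. Then (ΨΦ) lies in Λ⁴₂₇; in particular its projection onto Λ⁴₁ ⊕ Λ⁴₇ ⊕ Λ⁴₃₅ vanishes: (ΨΦ)_{ipqr} Φ_{apqr} = 0 for all i,a (sum over p,q,r). -/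

import Mathlib

namespace Spin7

noncomputable section

/-- Kronecker delta on `Fin 8`. -/
def kron (i j : Fin 8) : ℝ := if i = j then 1 else 0

/-- A 2-form: totally antisymmetric 2-tensor. -/
def Alt2 (β : Fin 8 → Fin 8 → ℝ) : Prop := ∀ i j, β i j = -β j i

/-- A 3-form: totally antisymmetric 3-tensor. -/
def Alt3 (γ : Fin 8 → Fin 8 → Fin 8 → ℝ) : Prop :=
  ∀ i j k, γ i j k = -γ j i k ∧ γ i j k = -γ i k j

/-- A 4-form: totally antisymmetric 4-tensor. -/
def Alt4 (Φ : Fin 8 → Fin 8 → Fin 8 → Fin 8 → ℝ) : Prop :=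
  ∀ i j k l, Φ i j k l = -Φ j i k l ∧ Φ i j k l = -Φ i k j l ∧ Φ i j k l = -Φ i j l k

/-- The Cayley contraction identity for a 4-form `Φ`. -/
def Cayley (Φ : Fin 8 → Fin 8 → Fin 8 → Fin 8 → ℝ) : Prop :=
  ∀ i j k a b c : Fin 8,
    (∑ p, Φ i j k p * Φ a b c p) =
      kron i a * kron j b * kron k c + kron i b * kron j c * kron k a
        + kron i c * kron j a * kron k b
      - kron i a * kron j c * kron k b - kron i c * kron j b * kron k a
      - kron i b * kron j a * kron k c
      - kron i a * Φ j k b c - kron j a * Φ k i b c - kron k a * Φ i j b c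
      - kron i b * Φ j k c a - kron j b * Φ k i c a - kron k b * Φ i j c a
      - kron i c * Φ j k a b - kron j c * Φ k i a b - kron k c * Φ i j a b

/-- The operator J₂ on 2-forms: `J₂(β)_{ij} = ½ Φ_{ijab} β_{ab}`. -/
def J2 (Φ : Fin 8 → Fin 8 → Fin 8 → Fin 8 → ℝ) (β : Fin 8 → Fin 8 → ℝ) :
    Fin 8 → Fin 8 → ℝ :=
  fun i j => (1/2 : ℝ) * ∑ a, ∑ b, Φ i j a b * β a b

/-- π₇ = ¼(Id − J₂). -/
def pi7 (Φ : Fin 8 → Fin 8 → Fin 8 → Fin 8 → ℝ) (β : Fin 8 → Fin 8 → ℝ) :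
    Fin 8 → Fin 8 → ℝ :=
  fun i j => (1/4 : ℝ) * (β i j - J2 Φ β i j)

/-- π₂₁ = ¼(3·Id + J₂). -/
def pi21 (Φ : Fin 8 → Fin 8 → Fin 8 → Fin 8 → ℝ) (β : Fin 8 → Fin 8 → ℝ) :
    Fin 8 → Fin 8 → ℝ :=
  fun i j => (1/4 : ℝ) * (3 * β i j + J2 Φ β i j)

/-- The operator J₃ on 3-forms. -/
def J3 (Φ : Fin 8 → Fin 8 → Fin 8 → Fin 8 → ℝ) (γ : Fin 8 → Fin 8 → Fin 8 → ℝ) :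
    Fin 8 → Fin 8 → Fin 8 → ℝ :=
  fun i j k => (1/2 : ℝ) *
    ∑ p, ∑ q, (Φ i j p q * γ k p q + Φ j k p q * γ i p q + Φ k i p q * γ j p q)

/-- π₈ = (1/7)(Id − J₃). -/
def pi8 (Φ : Fin 8 → Fin 8 → Fin 8 → Fin 8 → ℝ) (γ : Fin 8 → Fin 8 → Fin 8 → ℝ) :
    Fin 8 → Fin 8 → Fin 8 → ℝ :=
  fun i j k => (1/7 : ℝ) * (γ i j k - J3 Φ γ i j k)

/-- π₄₈ = (6/7)(Id + (1/6)J₃). -/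
def pi48 (Φ : Fin 8 → Fin 8 → Fin 8 → Fin 8 → ℝ) (γ : Fin 8 → Fin 8 → Fin 8 → ℝ) :
    Fin 8 → Fin 8 → Fin 8 → ℝ :=
  fun i j k => (6/7 : ℝ) * (γ i j k + (1/6 : ℝ) * J3 Φ γ i j k)

/-- The operator J₄ on 4-forms. -/
def J4 (Φ σ : Fin 8 → Fin 8 → Fin 8 → Fin 8 → ℝ) :
    Fin 8 → Fin 8 → Fin 8 → Fin 8 → ℝ :=
  fun i j k l => (1/2 : ℝ) * ∑ p, ∑ q,
    (Φ i j p q * σ p q k l + Φ k i p q * σ p q j l + Φ i l p q * σ p q j k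
      + Φ k l p q * σ p q i j + Φ j l p q * σ p q k i + Φ j k p q * σ p q i l)

/-- Antisymmetrization with weight 1/4! over four `Fin 8` indices. -/
def asym4 (g : Fin 8 → Fin 8 → Fin 8 → Fin 8 → ℝ) (i j k l : Fin 8) : ℝ :=
  (1/24 : ℝ) * ∑ τ : Equiv.Perm (Fin 4),
    ((Equiv.Perm.sign τ : ℤ) : ℝ) *
      g (![i, j, k, l] (τ 0)) (![i, j, k, l] (τ 1)) (![i, j, k, l] (τ 2)) (![i, j, k, l] (τ 3))

/-- Simultaneous antisymmetrization (weight 1/4! each) over a lower group of four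
indices and an upper group of four indices. -/
def asym44 (F : Fin 8 → Fin 8 → Fin 8 → Fin 8 → Fin 8 → Fin 8 → Fin 8 → Fin 8 → ℝ)
    (i j k l a b c d : Fin 8) : ℝ :=
  asym4 (fun i' j' k' l' => asym4 (F i' j' k' l') a b c d) i j k l

/-- The projector π₂₇ on 4-forms. -/
def pi27 (Φ σ : Fin 8 → Fin 8 → Fin 8 → Fin 8 → ℝ) :
    Fin 8 → Fin 8 → Fin 8 → Fin 8 → ℝ :=
  fun i j k l => (3/32 : ℝ) *
    (asym4 (fun i' j' k' l' =>
        ∑ a, ∑ b, ∑ c, ∑ d, Φ i' j' a b * Φ k' l' c d * σ a b c d) i j k l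
      - 4 * asym4 (fun i' j' k' l' => ∑ a, ∑ b, Φ i' j' a b * σ k' l' a b) i j k l
      - (1/7 : ℝ) * Φ i j k l * (∑ a, ∑ b, ∑ c, ∑ d, Φ a b c d * σ a b c d)
      + 4 * σ i j k l)

/-- The map `K(H)_{ijkl} = H_{ip}Φ_{pjkl} − H_{jp}Φ_{pikl} + H_{kp}Φ_{pijl} − H_{lp}Φ_{pijk}`. -/
def Kmap (Φ : Fin 8 → Fin 8 → Fin 8 → Fin 8 → ℝ) (H : Fin 8 → Fin 8 → ℝ) :
    Fin 8 → Fin 8 → Fin 8 → Fin 8 → ℝ :=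
  fun i j k l => ∑ p,
    (H i p * Φ p j k l - H j p * Φ p i k l + H k p * Φ p i j l - H l p * Φ p i j k)

/-- The map `K'(σ)_{ij} = ½ Φ_{ipqr} σ_{jpqr} − ½ Φ_{jpqr} σ_{ipqr}`. -/
def Kprime (Φ σ : Fin 8 → Fin 8 → Fin 8 → Fin 8 → ℝ) : Fin 8 → Fin 8 → ℝ :=
  fun i j => (1/2 : ℝ) * ∑ p, ∑ q, ∑ r, (Φ i p q r * σ j p q r - Φ j p q r * σ i p q r)

/-- The totally antisymmetric Levi-Civita symbol on 8 indices with `ε_{12345678} = 1`. -/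
def eps8 (v : Fin 8 → Fin 8) : ℝ :=
  Matrix.det (Matrix.of fun r c => if v r = c then (1 : ℝ) else 0)

/-- Self-duality of the 4-form `Φ`. -/
def SelfDual (Φ : Fin 8 → Fin 8 → Fin 8 → Fin 8 → ℝ) : Prop :=
  ∀ i j k l, (1/24 : ℝ) *
    (∑ a, ∑ b, ∑ c, ∑ d, eps8 ![i, j, k, l, a, b, c, d] * Φ a b c d) = Φ i j k l

/-- Antisymmetrization with weight 1/5! over five `Fin 8` indices. -/
def asym5 (g : Fin 8 → Fin 8 → Fin 8 → Fin 8 → Fin 8 → ℝ) (a i j k l : Fin 8) : ℝ :=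
  (1/120 : ℝ) * ∑ τ : Equiv.Perm (Fin 5),
    ((Equiv.Perm.sign τ : ℤ) : ℝ) *
      g (![a, i, j, k, l] (τ 0)) (![a, i, j, k, l] (τ 1)) (![a, i, j, k, l] (τ 2))
        (![a, i, j, k, l] (τ 3)) (![a, i, j, k, l] (τ 4))

variable {Φ : Fin 8 → Fin 8 → Fin 8 → Fin 8 → ℝ}

lemma swap13 (hΦ : Alt4 Φ) (i j k l : Fin 8) : Φ i j k l = -Φ k j i l := by
  have h1 := (hΦ i j k l).1; have h2 := (hΦ j i k l).2.1; have h3 := (hΦ j k i l).1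
  linarith

lemma swap24 (hΦ : Alt4 Φ) (i j k l : Fin 8) : Φ i j k l = -Φ i l k j := by
  have h1 := (hΦ i j k l).2.2; have h2 := (hΦ i j l k).2.1; have h3 := (hΦ i l j k).2.2
  linarith

lemma swap14 (hΦ : Alt4 Φ) (i j k l : Fin 8) : Φ i j k l = -Φ l j k i := by
  have h1 := swap13 hΦ i j k l; have h2 := (hΦ k j i l).2.2; have h3 := swap13 hΦ k j l i
  linarith

lemma pairswap (hΦ : Alt4 Φ) (i j k l : Fin 8) : Φ i j k l = Φ k l i j := by
  have h1 := swap13 hΦ i j k l; have h2 := swap24 hΦ k j i l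
  linarith

lemma z13 (hΦ : Alt4 Φ) (k i a : Fin 8) : Φ k i k a = 0 := by
  have := swap13 hΦ k i k a; linarith

lemma z23 (hΦ : Alt4 Φ) (j k a : Fin 8) : Φ j k k a = 0 := by
  have := (hΦ j k k a).2.1; linarith

lemma z14 (hΦ : Alt4 Φ) (k i b : Fin 8) : Φ k i b k = 0 := by
  have := swap14 hΦ k i b k; linarith

lemma z24 (hΦ : Alt4 Φ) (i k b : Fin 8) : Φ i k b k = 0 := by
  have := swap24 hΦ i k b k; linarith


lemma C2 (hΦ : Alt4 Φ) (hC : Cayley Φ) (i j a b : Fin 8) :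
    (∑ k, ∑ p, Φ i j k p * Φ a b k p)
      = 6*(kron i a * kron j b - kron i b * kron j a) - 4 * Φ i j a b
        - kron i a * (∑ k, Φ j k b k) := by
  have ks : ∀ x y : Fin 8, kron x y = kron y x := by intro x y; simp [kron, eq_comm]
  have l1 : (∑ k : Fin 8, kron i a * kron j b * kron k k) = 8 * (kron i a * kron j b) := by
    simp [kron]
  have l2 : (∑ k, kron i b * kron j k * kron k a) = kron i b * kron j a := by
    simp [kron, mul_ite, ite_mul, Finset.sum_ite_eq, Finset.sum_ite_eq']
  have l3 : (∑ k, kron i k * kron j a * kron k b) = kron i b * kron j a := by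
    simp [kron, mul_ite, ite_mul, Finset.sum_ite_eq, Finset.sum_ite_eq']
  have l4 : (∑ k, kron i a * kron j k * kron k b) = kron i a * kron j b := by
    simp [kron, mul_ite, ite_mul, Finset.sum_ite_eq, Finset.sum_ite_eq']
  have l5 : (∑ k, kron i k * kron j b * kron k a) = kron i a * kron j b := by
    simp [kron, mul_ite, ite_mul, Finset.sum_ite_eq, Finset.sum_ite_eq']
  have l6 : (∑ k : Fin 8, kron i b * kron j a * kron k k) = 8 * (kron i b * kron j a) := by
    simp [kron]
  have l7 : (∑ k, kron i a * Φ j k b k) = kron i a * (∑ k, Φ j k b k) := by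
    rw [Finset.mul_sum]
  have l8 : (∑ k, kron j a * Φ k i b k) = 0 := by simp [z14 hΦ]
  have l9 : (∑ k, kron k a * Φ i j b k) = Φ i j b a := by
    simp [kron, ite_mul, Finset.sum_ite_eq]
  have l10 : (∑ k, kron i b * Φ j k k a) = 0 := by simp [z23 hΦ]
  have l11 : (∑ k, kron j b * Φ k i k a) = 0 := by simp [z13 hΦ]
  have l12 : (∑ k, kron k b * Φ i j k a) = Φ i j b a := by
    simp [kron, ite_mul, Finset.sum_ite_eq]
  have l13 : (∑ k, kron i k * Φ j k a b) = Φ j i a b := by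
    simp [kron, ite_mul, Finset.sum_ite_eq']
  have l14 : (∑ k, kron j k * Φ k i a b) = Φ j i a b := by
    simp [kron, ite_mul, Finset.sum_ite_eq']
  have l15 : (∑ k : Fin 8, kron k k * Φ i j a b) = 8 * Φ i j a b := by
    simp [kron]
  have h := Finset.sum_congr rfl (fun k (_ : k ∈ Finset.univ) => hC i j k a b k)
  rw [h]
  simp only [Finset.sum_add_distrib, Finset.sum_sub_distrib]
  rw [l1, l2, l3, l4, l5, l6, l7, l8, l9, l10, l11, l12, l13, l14, l15]
  have e1 : Φ i j b a = -Φ i j a b := (hΦ i j b a).2.2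
  have e2 : Φ j i a b = -Φ i j a b := (hΦ j i a b).1
  linarith

lemma Qzero (hΦ : Alt4 Φ) (hC : Cayley Φ) (j b : Fin 8) : (∑ k, Φ j k b k) = 0 := by
  have h1 := C2 hΦ hC 0 j 0 b
  have h2 := C2 hΦ hC 0 b 0 j
  have hL : (∑ k, ∑ p, Φ 0 j k p * Φ 0 b k p) = (∑ k, ∑ p, Φ 0 b k p * Φ 0 j k p) := by
    exact Finset.sum_congr rfl fun k _ => Finset.sum_congr rfl fun p _ => mul_comm _ _
  have hanti : (∑ k, Φ j k b k) = -(∑ k, Φ b k j k) := by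
    rw [← Finset.sum_neg_distrib]
    exact Finset.sum_congr rfl fun k _ => swap13 hΦ j k b k
  have hz1 : Φ 0 j 0 b = 0 := z13 hΦ 0 j b
  have hz2 : Φ 0 b 0 j = 0 := z13 hΦ 0 b j
  have k00 : kron (0 : Fin 8) 0 = 1 := by simp [kron]
  have ksym : kron (0:Fin 8) b * kron j 0 = kron (0:Fin 8) j * kron b 0 := by
    by_cases hj : j = 0 <;> by_cases hb : b = 0 <;> simp [kron, hj, hb, eq_comm]
  have ksym2 : kron b j = kron j b := by simp [kron, eq_comm]
  rw [h1, h2, hz1, hz2, k00] at hL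
  linarith

lemma C2' (hΦ : Alt4 Φ) (hC : Cayley Φ) (i j a b : Fin 8) :
    (∑ k, ∑ p, Φ i j k p * Φ a b k p)
      = 6*(kron i a * kron j b - kron i b * kron j a) - 4 * Φ i j a b := by
  rw [C2 hΦ hC, Qzero hΦ hC]; ring

lemma rot3 {M : Type*} [AddCommMonoid M] (f : Fin 8 → Fin 8 → Fin 8 → M) :
    (∑ a, ∑ b, ∑ c, f a b c) = ∑ b, ∑ c, ∑ a, f a b c := by
  rw [Finset.sum_comm]
  exact Finset.sum_congr rfl fun b _ => Finset.sum_comm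

lemma comm4 {M : Type*} [AddCommMonoid M] (f : Fin 8 → Fin 8 → Fin 8 → Fin 8 → M) :
    (∑ a, ∑ b, ∑ c, ∑ d, f a b c d) = ∑ c, ∑ d, ∑ a, ∑ b, f a b c d := by
  calc (∑ a, ∑ b, ∑ c, ∑ d, f a b c d) = ∑ a, ∑ c, ∑ d, ∑ b, f a b c d :=
        Finset.sum_congr rfl fun a _ => rot3 _
    _ = ∑ c, ∑ d, ∑ a, ∑ b, f a b c d := rot3 _

lemma symskew (W G : Fin 8 → Fin 8 → ℝ) (hW : ∀ x y, W x y = W y x)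
    (hG : ∀ x y, G x y = -G y x) : (∑ x, ∑ y, W x y * G x y) = 0 := by
  have h1 : (∑ x, ∑ y, W x y * G x y) = ∑ y, ∑ x, W x y * G x y := Finset.sum_comm
  have h2 : (∑ y, ∑ x, W x y * G x y) = ∑ x, ∑ y, -(W x y * G x y) := by
    refine Finset.sum_congr rfl fun x _ => Finset.sum_congr rfl fun y _ => ?_
    rw [hW y x, hG y x]; ring
  have h3 : (∑ x, ∑ y, -(W x y * G x y)) = -(∑ x, ∑ y, W x y * G x y) := by
    simp
  linarith

section Main
variable {Ψ : Fin 8 → Fin 8 → Fin 8 → Fin 8 → ℝ}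
variable (hΦ : Alt4 Φ) (hC : Cayley Φ)
    (hA1 : ∀ a b c d, Ψ a b c d = -Ψ b a c d)
    (hA2 : ∀ a b c d, Ψ a b c d = -Ψ a b d c)
    (hS : ∀ a b c d, Ψ a b c d = Ψ c d a b)
    (hTr : (∑ a, ∑ b, Ψ a b a b) = 0)
    (h7L : ∀ a b c d, (1/2 : ℝ) * (∑ p, ∑ q, Φ a b p q * Ψ p q c d) = -3 * Ψ a b c d)
    (h7R : ∀ a b c d, (1/2 : ℝ) * (∑ p, ∑ q, Φ c d p q * Ψ a b p q) = -3 * Ψ a b c d)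

include hΦ hC hA1 hA2 hS hTr h7L h7R in
lemma Mzero (i a : Fin 8) : (∑ p, Ψ i p a p) = 0 := by
  have hc : ∀ a b c d, (∑ p, ∑ q, Φ c d p q * Ψ a b p q) = -6 * Ψ a b c d := by
    intro a b c d; have := h7R a b c d; linarith
  have hcL : ∀ a b c d, (∑ p, ∑ q, Φ a b p q * Ψ p q c d) = -6 * Ψ a b c d := by
    intro a b c d; have := h7L a b c d; linarith
  have pe1 : ∀ s, Ψ s a i s = -Ψ i s a s := fun s => by
    have := hS s a i s; have := hA2 i s s a; linarith
  have pe2 : ∀ t, Ψ a t t i = -Ψ i t a t := fun t => by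
    have := hA1 a t t i; have := hS t a t i; have := hA1 t i t a; have := hA2 i t t a; linarith
  have pe3 : ∀ s, Ψ s a s i = Ψ i s a s := fun s => by
    have := hS s a s i; have := hA1 s i s a; have := hA2 i s s a; linarith
  have pe4 : ∀ t, Ψ a t i t = Ψ i t a t := fun t => by
    have := hA1 a t i t; have := hS t a i t; have := hA2 i t t a; linarith
  have pe5 : ∀ u, Ψ a u u i = -Ψ i u a u := fun u => by
    have := hA2 a u u i; have := hA1 a u i u; have := hS u a i u; have := hA2 i u u a; linarith
  have sum2c : ∀ (f : Fin 8 → Fin 8 → ℝ) (c : ℝ),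
      (∑ x, ∑ y, f x y * c) = (∑ x, ∑ y, f x y) * c := by
    intro f c; rw [Finset.sum_mul]
    exact Finset.sum_congr rfl fun x _ => (Finset.sum_mul ..).symm
  -- the 15 pieces
  have p1 : (∑ s, ∑ t, ∑ u, ∑ v, Ψ s t u v * (kron s u * kron t v * kron i a)) = 0 := by
    have h1 : (∑ s, ∑ t, ∑ u, ∑ v, Ψ s t u v * (kron s u * kron t v * kron i a))
        = ∑ s, ∑ t, Ψ s t s t * kron i a := by
      simp [kron, mul_ite, ite_mul, Finset.sum_ite_eq, Finset.sum_ite_eq']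
    rw [h1, sum2c, hTr, zero_mul]
  have p2 : (∑ s, ∑ t, ∑ u, ∑ v, Ψ s t u v * (kron s v * kron t a * kron i u))
      = -(∑ p, Ψ i p a p) := by
    have h1 : (∑ s, ∑ t, ∑ u, ∑ v, Ψ s t u v * (kron s v * kron t a * kron i u))
        = ∑ s, Ψ s a i s := by
      simp [kron, mul_ite, ite_mul, Finset.sum_ite_eq, Finset.sum_ite_eq']
    rw [h1, ← Finset.sum_neg_distrib]
    exact Finset.sum_congr rfl fun s _ => pe1 s
  have p3 : (∑ s, ∑ t, ∑ u, ∑ v, Ψ s t u v * (kron s a * kron t u * kron i v))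
      = -(∑ p, Ψ i p a p) := by
    have h1 : (∑ s, ∑ t, ∑ u, ∑ v, Ψ s t u v * (kron s a * kron t u * kron i v))
        = ∑ t, Ψ a t t i := by
      simp [kron, mul_ite, ite_mul, Finset.sum_ite_eq, Finset.sum_ite_eq']
    rw [h1, ← Finset.sum_neg_distrib]
    exact Finset.sum_congr rfl fun t _ => pe2 t
  have p4 : (∑ s, ∑ t, ∑ u, ∑ v, Ψ s t u v * (kron s u * kron t a * kron i v))
      = ∑ p, Ψ i p a p := by
    have h1 : (∑ s, ∑ t, ∑ u, ∑ v, Ψ s t u v * (kron s u * kron t a * kron i v))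
        = ∑ s, Ψ s a s i := by
      simp [kron, mul_ite, ite_mul, Finset.sum_ite_eq, Finset.sum_ite_eq']
    rw [h1]
    exact Finset.sum_congr rfl fun s _ => pe3 s
  have p5 : (∑ s, ∑ t, ∑ u, ∑ v, Ψ s t u v * (kron s a * kron t v * kron i u))
      = ∑ p, Ψ i p a p := by
    have h1 : (∑ s, ∑ t, ∑ u, ∑ v, Ψ s t u v * (kron s a * kron t v * kron i u))
        = ∑ t, Ψ a t i t := by
      simp [kron, mul_ite, ite_mul, Finset.sum_ite_eq, Finset.sum_ite_eq']
    rw [h1]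
    exact Finset.sum_congr rfl fun t _ => pe4 t
  have p6 : (∑ s, ∑ t, ∑ u, ∑ v, Ψ s t u v * (kron s v * kron t u * kron i a)) = 0 := by
    have h1 : (∑ s, ∑ t, ∑ u, ∑ v, Ψ s t u v * (kron s v * kron t u * kron i a))
        = ∑ s, ∑ t, Ψ s t t s * kron i a := by
      simp [kron, mul_ite, ite_mul, Finset.sum_ite_eq, Finset.sum_ite_eq']
    have h2 : (∑ s : Fin 8, ∑ t : Fin 8, Ψ s t t s * kron i a)
        = ∑ s, ∑ t, -(Ψ s t s t * kron i a) := by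
      refine Finset.sum_congr rfl fun s _ => Finset.sum_congr rfl fun t _ => ?_
      rw [hA2 s t t s]; ring
    rw [h1, h2]
    have h3 : (∑ s : Fin 8, ∑ t : Fin 8, -(Ψ s t s t * kron i a))
        = ∑ s : Fin 8, ∑ t : Fin 8, (-Ψ s t s t) * kron i a := by
      refine Finset.sum_congr rfl fun s _ => Finset.sum_congr rfl fun t _ => ?_; ring
    rw [h3, sum2c]
    have h4 : (∑ s : Fin 8, ∑ t : Fin 8, -Ψ s t s t) = 0 := by
      simp [Finset.sum_neg_distrib, hTr]
    rw [h4, zero_mul]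
  have p7 : (∑ s, ∑ t, ∑ u, ∑ v, Ψ s t u v * (kron s u * Φ t i v a)) = 0 := by
    have h1 : (∑ s, ∑ t, ∑ u, ∑ v, Ψ s t u v * (kron s u * Φ t i v a))
        = ∑ s, ∑ t, ∑ v, Ψ s t s v * Φ t i v a := by
      simp [kron, mul_ite, ite_mul, Finset.sum_ite_eq, Finset.sum_ite_eq']
    rw [h1, rot3]
    have h2 : (∑ t, ∑ v, ∑ s, Ψ s t s v * Φ t i v a)
        = ∑ t, ∑ v, (∑ s, Ψ s t s v) * Φ t i v a := by
      refine Finset.sum_congr rfl fun t _ => Finset.sum_congr rfl fun v _ => ?_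
      rw [Finset.sum_mul]
    rw [h2]
    exact symskew _ _ (fun t v => Finset.sum_congr rfl fun s _ => hS s t s v)
      (fun t v => swap13 hΦ t i v a)
  have p8 : (∑ s, ∑ t, ∑ u, ∑ v, Ψ s t u v * (kron t u * Φ i s v a)) = 0 := by
    have h1 : (∑ s, ∑ t, ∑ u, ∑ v, Ψ s t u v * (kron t u * Φ i s v a))
        = ∑ s, ∑ t, ∑ v, Ψ s t t v * Φ i s v a := by
      simp [kron, mul_ite, ite_mul, Finset.sum_ite_eq, Finset.sum_ite_eq']
    have h2 : (∑ s, ∑ t, ∑ v, Ψ s t t v * Φ i s v a)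
        = ∑ s, ∑ v, ∑ t, Ψ s t t v * Φ i s v a :=
      Finset.sum_congr rfl fun s _ => Finset.sum_comm
    have h3 : (∑ s, ∑ v, ∑ t, Ψ s t t v * Φ i s v a)
        = ∑ s, ∑ v, (∑ t, Ψ s t t v) * Φ i s v a := by
      refine Finset.sum_congr rfl fun s _ => Finset.sum_congr rfl fun v _ => ?_
      rw [Finset.sum_mul]
    rw [h1, h2, h3]
    refine symskew _ _ (fun x y => Finset.sum_congr rfl fun t _ => ?_)
      (fun x y => (hΦ i x y a).2.1)
    have := hA1 x t t y; have := hA2 t x t y; have := hS t x y t; linarith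
  have p10 : (∑ s, ∑ t, ∑ u, ∑ v, Ψ s t u v * (kron s v * Φ t i a u)) = 0 := by
    have h1 : (∑ s, ∑ t, ∑ u, ∑ v, Ψ s t u v * (kron s v * Φ t i a u))
        = ∑ s, ∑ t, ∑ u, Ψ s t u s * Φ t i a u := by
      simp [kron, mul_ite, ite_mul, Finset.sum_ite_eq, Finset.sum_ite_eq']
    rw [h1, rot3]
    have h2 : (∑ t, ∑ u, ∑ s, Ψ s t u s * Φ t i a u)
        = ∑ t, ∑ u, (∑ s, Ψ s t u s) * Φ t i a u := by
      refine Finset.sum_congr rfl fun t _ => Finset.sum_congr rfl fun u _ => ?_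
      rw [Finset.sum_mul]
    rw [h2]
    refine symskew _ _ (fun x y => Finset.sum_congr rfl fun s _ => ?_)
      (fun x y => swap14 hΦ x i a y)
    have := hS s x y s; have := hA1 y s s x; have := hA2 s y s x; linarith
  have p11 : (∑ s, ∑ t, ∑ u, ∑ v, Ψ s t u v * (kron t v * Φ i s a u)) = 0 := by
    have h1 : (∑ s, ∑ t, ∑ u, ∑ v, Ψ s t u v * (kron t v * Φ i s a u))
        = ∑ s, ∑ t, ∑ u, Ψ s t u t * Φ i s a u := by
      simp [kron, mul_ite, ite_mul, Finset.sum_ite_eq, Finset.sum_ite_eq']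
    have h2 : (∑ s, ∑ t, ∑ u, Ψ s t u t * Φ i s a u)
        = ∑ s, ∑ u, ∑ t, Ψ s t u t * Φ i s a u :=
      Finset.sum_congr rfl fun s _ => Finset.sum_comm
    have h3 : (∑ s, ∑ u, ∑ t, Ψ s t u t * Φ i s a u)
        = ∑ s, ∑ u, (∑ t, Ψ s t u t) * Φ i s a u := by
      refine Finset.sum_congr rfl fun s _ => Finset.sum_congr rfl fun u _ => ?_
      rw [Finset.sum_mul]
    rw [h1, h2, h3]
    exact symskew _ _ (fun x y => Finset.sum_congr rfl fun t _ => hS x t y t)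
      (fun x y => swap24 hΦ i x a y)
  have p9 : (∑ s, ∑ t, ∑ u, ∑ v, Ψ s t u v * (kron i u * Φ s t v a))
      = 6 * ∑ p, Ψ i p a p := by
    have h1 : (∑ s, ∑ t, ∑ u, ∑ v, Ψ s t u v * (kron i u * Φ s t v a))
        = ∑ s, ∑ t, ∑ v, Ψ s t i v * Φ s t v a := by
      simp [kron, mul_ite, ite_mul, Finset.sum_ite_eq, Finset.sum_ite_eq']
    have h2 : (∑ s, ∑ t, ∑ v, Ψ s t i v * Φ s t v a)
        = ∑ v, ∑ s, ∑ t, Ψ s t i v * Φ s t v a := (rot3 _).trans (rot3 _)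
    have h3 : (∑ v, ∑ s, ∑ t, Ψ s t i v * Φ s t v a)
        = ∑ v, ∑ s, ∑ t, Φ v a s t * Ψ s t i v := by
      refine Finset.sum_congr rfl fun v _ => Finset.sum_congr rfl fun s _ =>
        Finset.sum_congr rfl fun t _ => ?_
      rw [pairswap hΦ s t v a]; ring
    have h4 : (∑ v, ∑ s, ∑ t, Φ v a s t * Ψ s t i v) = ∑ v, -6 * Ψ v a i v :=
      Finset.sum_congr rfl fun v _ => hcL v a i v
    rw [h1, h2, h3, h4, Finset.mul_sum]
    refine Finset.sum_congr rfl fun v _ => ?_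
    rw [pe1 v]; ring
  have p12 : (∑ s, ∑ t, ∑ u, ∑ v, Ψ s t u v * (kron i v * Φ s t a u))
      = 6 * ∑ p, Ψ i p a p := by
    have h1 : (∑ s, ∑ t, ∑ u, ∑ v, Ψ s t u v * (kron i v * Φ s t a u))
        = ∑ s, ∑ t, ∑ u, Ψ s t u i * Φ s t a u := by
      simp [kron, mul_ite, ite_mul, Finset.sum_ite_eq, Finset.sum_ite_eq']
    have h2 : (∑ s, ∑ t, ∑ u, Ψ s t u i * Φ s t a u)
        = ∑ u, ∑ s, ∑ t, Ψ s t u i * Φ s t a u := (rot3 _).trans (rot3 _)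
    have h3 : (∑ u, ∑ s, ∑ t, Ψ s t u i * Φ s t a u)
        = ∑ u, ∑ s, ∑ t, Φ a u s t * Ψ s t u i := by
      refine Finset.sum_congr rfl fun u _ => Finset.sum_congr rfl fun s _ =>
        Finset.sum_congr rfl fun t _ => ?_
      rw [pairswap hΦ s t a u]; ring
    have h4 : (∑ u, ∑ s, ∑ t, Φ a u s t * Ψ s t u i) = ∑ u, -6 * Ψ a u u i :=
      Finset.sum_congr rfl fun u _ => hcL a u u i
    rw [h1, h2, h3, h4, Finset.mul_sum]
    refine Finset.sum_congr rfl fun u _ => ?_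
    rw [pe5 u]; ring
  have p13 : (∑ s, ∑ t, ∑ u, ∑ v, Ψ s t u v * (kron s a * Φ t i u v))
      = 6 * ∑ p, Ψ i p a p := by
    have h1 : (∑ s, ∑ t, ∑ u, ∑ v, Ψ s t u v * (kron s a * Φ t i u v))
        = ∑ t, ∑ u, ∑ v, Ψ a t u v * Φ t i u v := by
      simp [kron, mul_ite, ite_mul, Finset.sum_ite_eq, Finset.sum_ite_eq']
    have h2 : (∑ t, ∑ u, ∑ v, Ψ a t u v * Φ t i u v)
        = ∑ t, ∑ u, ∑ v, Φ t i u v * Ψ a t u v := by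
      refine Finset.sum_congr rfl fun t _ => Finset.sum_congr rfl fun u _ =>
        Finset.sum_congr rfl fun v _ => mul_comm _ _
    have h3 : (∑ t, ∑ u, ∑ v, Φ t i u v * Ψ a t u v) = ∑ t, -6 * Ψ a t t i :=
      Finset.sum_congr rfl fun t _ => hc a t t i
    rw [h1, h2, h3, Finset.mul_sum]
    refine Finset.sum_congr rfl fun t _ => ?_
    rw [pe2 t]; ring
  have p14 : (∑ s, ∑ t, ∑ u, ∑ v, Ψ s t u v * (kron t a * Φ i s u v))
      = 6 * ∑ p, Ψ i p a p := by
    have h1 : (∑ s, ∑ t, ∑ u, ∑ v, Ψ s t u v * (kron t a * Φ i s u v))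
        = ∑ s, ∑ u, ∑ v, Ψ s a u v * Φ i s u v := by
      simp [kron, mul_ite, ite_mul, Finset.sum_ite_eq, Finset.sum_ite_eq']
    have h2 : (∑ s, ∑ u, ∑ v, Ψ s a u v * Φ i s u v)
        = ∑ s, ∑ u, ∑ v, Φ i s u v * Ψ s a u v := by
      refine Finset.sum_congr rfl fun s _ => Finset.sum_congr rfl fun u _ =>
        Finset.sum_congr rfl fun v _ => mul_comm _ _
    have h3 : (∑ s, ∑ u, ∑ v, Φ i s u v * Ψ s a u v) = ∑ s, -6 * Ψ s a i s :=
      Finset.sum_congr rfl fun s _ => hc s a i s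
    rw [h1, h2, h3, Finset.mul_sum]
    refine Finset.sum_congr rfl fun s _ => ?_
    rw [pe1 s]; ring
  have p15 : (∑ s, ∑ t, ∑ u, ∑ v, Ψ s t u v * (kron i a * Φ s t u v)) = 0 := by
    have h1 : (∑ s, ∑ t, ∑ u, ∑ v, Ψ s t u v * (kron i a * Φ s t u v))
        = ∑ s, ∑ t, (∑ u, ∑ v, Φ s t u v * Ψ s t u v) * kron i a := by
      refine Finset.sum_congr rfl fun s _ => Finset.sum_congr rfl fun t _ => ?_
      rw [Finset.sum_mul]
      refine Finset.sum_congr rfl fun u _ => ?_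
      rw [Finset.sum_mul]
      exact Finset.sum_congr rfl fun v _ => by ring
    have h2 : (∑ s, ∑ t, (∑ u, ∑ v, Φ s t u v * Ψ s t u v) * kron i a)
        = ∑ s, ∑ t, (-6 * Ψ s t s t) * kron i a := by
      refine Finset.sum_congr rfl fun s _ => Finset.sum_congr rfl fun t _ => ?_
      rw [hc s t s t]
    rw [h1, h2, sum2c]
    have h4 : (∑ s : Fin 8, ∑ t : Fin 8, -6 * Ψ s t s t) = 0 := by
      have : (∑ s : Fin 8, ∑ t : Fin 8, -6 * Ψ s t s t)
          = -6 * ∑ s : Fin 8, ∑ t : Fin 8, Ψ s t s t := by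
        rw [Finset.mul_sum]
        exact Finset.sum_congr rfl fun s _ => (Finset.mul_sum ..).symm
      rw [this, hTr]; ring
    rw [h4, zero_mul]
  -- Route 1 : X = 36 M
  have hX1 : (∑ s, ∑ t, ∑ u, ∑ v, Ψ s t u v * (∑ p, Φ s t i p * Φ u v a p))
      = 36 * ∑ p, Ψ i p a p := by
    calc (∑ s, ∑ t, ∑ u, ∑ v, Ψ s t u v * (∑ p, Φ s t i p * Φ u v a p))
        = ∑ s, ∑ t, ∑ u, ∑ v, ∑ p, Ψ s t u v * (Φ s t i p * Φ u v a p) := by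
          refine Finset.sum_congr rfl fun s _ => Finset.sum_congr rfl fun t _ =>
            Finset.sum_congr rfl fun u _ => Finset.sum_congr rfl fun v _ => ?_
          exact Finset.mul_sum ..
      _ = ∑ s, ∑ t, ∑ p, ∑ u, ∑ v, Ψ s t u v * (Φ s t i p * Φ u v a p) := by
          refine Finset.sum_congr rfl fun s _ => Finset.sum_congr rfl fun t _ => ?_
          exact (rot3 fun p u v => Ψ s t u v * (Φ s t i p * Φ u v a p)).symm
      _ = ∑ s, ∑ t, ∑ p, (∑ u, ∑ v, Φ a p u v * Ψ s t u v) * Φ s t i p := by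
          refine Finset.sum_congr rfl fun s _ => Finset.sum_congr rfl fun t _ =>
            Finset.sum_congr rfl fun p _ => ?_
          rw [Finset.sum_mul]
          refine Finset.sum_congr rfl fun u _ => ?_
          rw [Finset.sum_mul]
          refine Finset.sum_congr rfl fun v _ => ?_
          rw [pairswap hΦ u v a p]; ring
      _ = ∑ s, ∑ t, ∑ p, (-6 * Ψ s t a p) * Φ s t i p := by
          refine Finset.sum_congr rfl fun s _ => Finset.sum_congr rfl fun t _ =>
            Finset.sum_congr rfl fun p _ => ?_
          rw [hc s t a p]
      _ = ∑ p, ∑ s, ∑ t, (-6 * Ψ s t a p) * Φ s t i p := (rot3 _).trans (rot3 _)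
      _ = ∑ p, -6 * ∑ s, ∑ t, Φ i p s t * Ψ s t a p := by
          refine Finset.sum_congr rfl fun p _ => ?_
          rw [Finset.mul_sum]
          refine Finset.sum_congr rfl fun s _ => ?_
          rw [Finset.mul_sum]
          refine Finset.sum_congr rfl fun t _ => ?_
          rw [pairswap hΦ s t i p]; ring
      _ = ∑ p, 36 * Ψ i p a p := by
          refine Finset.sum_congr rfl fun p _ => ?_
          rw [hcL i p a p]; ring
      _ = 36 * ∑ p, Ψ i p a p := (Finset.mul_sum ..).symm
  -- Route 2 : X = -28 M
  have hX2 : (∑ s, ∑ t, ∑ u, ∑ v, Ψ s t u v * (∑ p, Φ s t i p * Φ u v a p))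
      = -28 * ∑ p, Ψ i p a p := by
    have h1 : (∑ s, ∑ t, ∑ u, ∑ v, Ψ s t u v * (∑ p, Φ s t i p * Φ u v a p))
        = ∑ s, ∑ t, ∑ u, ∑ v, Ψ s t u v *
          (kron s u * kron t v * kron i a + kron s v * kron t a * kron i u
            + kron s a * kron t u * kron i v
          - kron s u * kron t a * kron i v - kron s a * kron t v * kron i u
          - kron s v * kron t u * kron i a
          - kron s u * Φ t i v a - kron t u * Φ i s v a - kron i u * Φ s t v a
          - kron s v * Φ t i a u - kron t v * Φ i s a u - kron i v * Φ s t a u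
          - kron s a * Φ t i u v - kron t a * Φ i s u v - kron i a * Φ s t u v) := by
      refine Finset.sum_congr rfl fun s _ => Finset.sum_congr rfl fun t _ =>
        Finset.sum_congr rfl fun u _ => Finset.sum_congr rfl fun v _ => ?_
      rw [hC s t i u v a]
    rw [h1]
    simp only [mul_add, mul_sub, Finset.sum_add_distrib, Finset.sum_sub_distrib]
    rw [p1, p2, p3, p4, p5, p6, p7, p8, p9, p10, p11, p12, p13, p14, p15]
    ring
  linarith

include hΦ hC hA1 hA2 hS hTr h7L h7R in
lemma Tzero (i a : Fin 8) : (∑ p, ∑ q, ∑ r, Ψ i p q r * Φ a p q r) = 0 := by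
  have hc : ∀ a b c d, (∑ p, ∑ q, Φ c d p q * Ψ a b p q) = -6 * Ψ a b c d := by
    intro a b c d; have := h7R a b c d; linarith
  have hM := Mzero hΦ hC hA1 hA2 hS hTr h7L h7R (Ψ := Ψ) i a
  -- Route A : Y = -6 T
  have hY1 : (∑ p, ∑ s, ∑ t, Ψ i p s t * (∑ q, ∑ r, Φ s t q r * Φ a p q r))
      = -6 * ∑ p, ∑ q, ∑ r, Ψ i p q r * Φ a p q r := by
    calc (∑ p, ∑ s, ∑ t, Ψ i p s t * (∑ q, ∑ r, Φ s t q r * Φ a p q r))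
        = ∑ p, ∑ s, ∑ t, ∑ q, ∑ r, Ψ i p s t * (Φ s t q r * Φ a p q r) := by
          refine Finset.sum_congr rfl fun p _ => Finset.sum_congr rfl fun s _ =>
            Finset.sum_congr rfl fun t _ => ?_
          rw [Finset.mul_sum]
          refine Finset.sum_congr rfl fun q _ => ?_
          exact Finset.mul_sum ..
      _ = ∑ p, ∑ q, ∑ r, ∑ s, ∑ t, Ψ i p s t * (Φ s t q r * Φ a p q r) :=
          Finset.sum_congr rfl fun p _ => comm4 _
      _ = ∑ p, ∑ q, ∑ r, (∑ s, ∑ t, Φ q r s t * Ψ i p s t) * Φ a p q r := by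
          refine Finset.sum_congr rfl fun p _ => Finset.sum_congr rfl fun q _ =>
            Finset.sum_congr rfl fun r _ => ?_
          rw [Finset.sum_mul]
          refine Finset.sum_congr rfl fun s _ => ?_
          rw [Finset.sum_mul]
          refine Finset.sum_congr rfl fun t _ => ?_
          rw [pairswap hΦ s t q r]; ring
      _ = ∑ p, ∑ q, ∑ r, (-6 * Ψ i p q r) * Φ a p q r := by
          refine Finset.sum_congr rfl fun p _ => Finset.sum_congr rfl fun q _ =>
            Finset.sum_congr rfl fun r _ => ?_
          rw [hc i p q r]
      _ = -6 * ∑ p, ∑ q, ∑ r, Ψ i p q r * Φ a p q r := by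
          rw [Finset.mul_sum]
          refine Finset.sum_congr rfl fun p _ => ?_
          rw [Finset.mul_sum]
          refine Finset.sum_congr rfl fun q _ => ?_
          rw [Finset.mul_sum]
          exact Finset.sum_congr rfl fun r _ => by ring
  -- Route B : Y = 36 M = 0
  have q1 : (∑ p, ∑ s, ∑ t, Ψ i p s t * (kron s a * kron t p)) = ∑ p, Ψ i p a p := by
    simp [kron, mul_ite, ite_mul, Finset.sum_ite_eq, Finset.sum_ite_eq']
  have q2 : (∑ p, ∑ s, ∑ t, Ψ i p s t * (kron s p * kron t a)) = -∑ p, Ψ i p a p := by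
    have h1 : (∑ p, ∑ s, ∑ t, Ψ i p s t * (kron s p * kron t a)) = ∑ p, Ψ i p p a := by
      simp [kron, mul_ite, ite_mul, Finset.sum_ite_eq, Finset.sum_ite_eq']
    rw [h1, ← Finset.sum_neg_distrib]
    exact Finset.sum_congr rfl fun p _ => hA2 i p p a
  have q3 : (∑ p, ∑ s, ∑ t, Ψ i p s t * Φ s t a p) = -6 * ∑ p, Ψ i p a p := by
    calc (∑ p, ∑ s, ∑ t, Ψ i p s t * Φ s t a p)
        = ∑ p, ∑ s, ∑ t, Φ a p s t * Ψ i p s t := by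
          refine Finset.sum_congr rfl fun p _ => Finset.sum_congr rfl fun s _ =>
            Finset.sum_congr rfl fun t _ => ?_
          rw [pairswap hΦ s t a p]; ring
      _ = ∑ p, -6 * Ψ i p a p := Finset.sum_congr rfl fun p _ => hc i p a p
      _ = -6 * ∑ p, Ψ i p a p := (Finset.mul_sum ..).symm
  have hY2 : (∑ p, ∑ s, ∑ t, Ψ i p s t * (∑ q, ∑ r, Φ s t q r * Φ a p q r))
      = 36 * ∑ p, Ψ i p a p := by
    have h1 : (∑ p, ∑ s, ∑ t, Ψ i p s t * (∑ q, ∑ r, Φ s t q r * Φ a p q r))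
        = ∑ p, ∑ s, ∑ t, (6 * (Ψ i p s t * (kron s a * kron t p))
            - 6 * (Ψ i p s t * (kron s p * kron t a)) - 4 * (Ψ i p s t * Φ s t a p)) := by
      refine Finset.sum_congr rfl fun p _ => Finset.sum_congr rfl fun s _ =>
        Finset.sum_congr rfl fun t _ => ?_
      rw [C2' hΦ hC s t a p]; ring
    rw [h1]
    simp only [Finset.sum_sub_distrib, ← Finset.mul_sum]
    rw [q1, q2, q3]; ring
  rw [hY2, hM] at hY1
  linarith


end Main

lemma asym4_expand (g : Fin 8 → Fin 8 → Fin 8 → Fin 8 → ℝ) (i j k l : Fin 8) :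
    asym4 g i j k l = (1/24 : ℝ) *
      (g i j k l - g i j l k - g i k j l + g i k l j + g i l j k - g i l k j
       - g j i k l + g j i l k + g j k i l - g j k l i - g j l i k + g j l k i
       + g k i j l - g k i l j - g k j i l + g k j l i + g k l i j - g k l j i
       - g l i j k + g l i k j + g l j i k - g l j k i - g l k i j + g l k j i) := by
  unfold asym4
  rw [Finset.univ_perm_fin_succ, ← Finset.univ_product_univ]
  simp only [Finset.sum_map, Equiv.toEmbedding_apply, Finset.sum_product]
  rw [Finset.univ_perm_fin_succ, ← Finset.univ_product_univ]
  simp only [Finset.sum_map, Equiv.toEmbedding_apply, Finset.sum_product]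
  rw [Finset.univ_perm_fin_succ, ← Finset.univ_product_univ]
  simp only [Finset.sum_map, Equiv.toEmbedding_apply, Finset.sum_product]
  simp only [show (3:Fin 4) = Fin.succ 2 from rfl, show (2:Fin 4) = Fin.succ 1 from rfl,
    show (1:Fin 4) = Fin.succ 0 from rfl, show (2:Fin 3) = Fin.succ 1 from rfl,
    show (1:Fin 3) = Fin.succ 0 from rfl, show (1:Fin 2) = Fin.succ 0 from rfl]
  simp only [Fin.sum_univ_succ, Fin.sum_univ_zero, Equiv.Perm.decomposeFin.symm_sign,
    Equiv.Perm.decomposeFin_symm_apply_zero, Equiv.Perm.decomposeFin_symm_apply_succ,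
    Finset.univ_unique, Finset.sum_singleton, Equiv.Perm.one_apply, Equiv.swap_apply_def]
  norm_num [Fin.ext_iff]
  simp only [Matrix.cons_val]
  ring

section Final
variable {Ψ : Fin 8 → Fin 8 → Fin 8 → Fin 8 → ℝ}
variable (hΦ : Alt4 Φ) (hC : Cayley Φ)
    (hA1 : ∀ a b c d, Ψ a b c d = -Ψ b a c d)
    (hA2 : ∀ a b c d, Ψ a b c d = -Ψ a b d c)
    (hS : ∀ a b c d, Ψ a b c d = Ψ c d a b)
    (hTr : (∑ a, ∑ b, Ψ a b a b) = 0)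
    (h7L : ∀ a b c d, (1/2 : ℝ) * (∑ p, ∑ q, Φ a b p q * Ψ p q c d) = -3 * Ψ a b c d)
    (h7R : ∀ a b c d, (1/2 : ℝ) * (∑ p, ∑ q, Φ c d p q * Ψ a b p q) = -3 * Ψ a b c d)

include hΦ hC hA1 hA2 hS hTr h7L h7R in
theorem main (i a : Fin 8) :
    (∑ p, ∑ q, ∑ r,
      asym4 (fun a' b' c' d' => ∑ s, ∑ t, Ψ a' b' s t * Φ c' d' s t) i p q r
        * Φ a p q r) = 0 := by
  have hc' : ∀ a b c d, (∑ s, ∑ t, Ψ a b s t * Φ c d s t) = -6 * Ψ a b c d := by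
    intro a b c d
    have h1 : (∑ s, ∑ t, Ψ a b s t * Φ c d s t) = ∑ s, ∑ t, Φ c d s t * Ψ a b s t :=
      Finset.sum_congr rfl fun s _ => Finset.sum_congr rfl fun t _ => mul_comm _ _
    have := h7R a b c d; linarith
  have step1 : ∀ p q r : Fin 8,
      asym4 (fun a' b' c' d' => ∑ s, ∑ t, Ψ a' b' s t * Φ c' d' s t) i p q r
        = -2 * (Ψ i p q r + Ψ i q r p + Ψ i r p q) := by
    intro p q r
    rw [asym4_expand]
    simp only [hc']
    linarith [hA1 i p q r,
      hA2 i p q r,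
      hS i p q r,
      hA1 i p r q,
      hA2 i p r q,
      hS i p r q,
      hA1 i q p r,
      hA2 i q p r,
      hS i q p r,
      hA1 i q r p,
      hA2 i q r p,
      hS i q r p,
      hA1 i r p q,
      hA2 i r p q,
      hS i r p q,
      hA1 i r q p,
      hA2 i r q p,
      hS i r q p,
      hA1 p i q r,
      hA2 p i q r,
      hS p i q r,
      hA1 p i r q,
      hA2 p i r q,
      hS p i r q,
      hA1 p q i r,
      hA2 p q i r,
      hS p q i r,
      hA1 p q r i,
      hA2 p q r i,
      hS p q r i,
      hA1 p r i q,
      hA2 p r i q,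
      hS p r i q,
      hA1 p r q i,
      hA2 p r q i,
      hS p r q i,
      hA1 q i p r,
      hA2 q i p r,
      hS q i p r,
      hA1 q i r p,
      hA2 q i r p,
      hS q i r p,
      hA1 q p i r,
      hA2 q p i r,
      hS q p i r,
      hA1 q p r i,
      hA2 q p r i,
      hS q p r i,
      hA1 q r i p,
      hA2 q r i p,
      hS q r i p,
      hA1 q r p i,
      hA2 q r p i,
      hS q r p i,
      hA1 r i p q,
      hA2 r i p q,
      hS r i p q,
      hA1 r i q p,
      hA2 r i q p,
      hS r i q p,
      hA1 r p i q,
      hA2 r p i q,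
      hS r p i q,
      hA1 r p q i,
      hA2 r p q i,
      hS r p q i,
      hA1 r q i p,
      hA2 r q i p,
      hS r q i p,
      hA1 r q p i,
      hA2 r q p i,
      hS r q p i]
  have hT := Tzero hΦ hC hA1 hA2 hS hTr h7L h7R (Ψ := Ψ) i a
  have hS2 : (∑ p, ∑ q, ∑ r, Ψ i q r p * Φ a p q r)
      = ∑ p, ∑ q, ∑ r, Ψ i p q r * Φ a p q r := by
    rw [rot3 (fun p q r => Ψ i q r p * Φ a p q r)]
    refine Finset.sum_congr rfl fun x _ => Finset.sum_congr rfl fun y _ =>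
      Finset.sum_congr rfl fun z _ => ?_
    have h1 := (hΦ a z x y).2.1
    have h2 := (hΦ a x z y).2.2
    rw [show Φ a z x y = Φ a x y z by linarith]
  have hS3 : (∑ p, ∑ q, ∑ r, Ψ i r p q * Φ a p q r)
      = ∑ p, ∑ q, ∑ r, Ψ i p q r * Φ a p q r := by
    rw [(rot3 (fun p q r => Ψ i r p q * Φ a p q r)).trans (rot3 _)]
    refine Finset.sum_congr rfl fun x _ => Finset.sum_congr rfl fun y _ =>
      Finset.sum_congr rfl fun z _ => ?_
    have h1 := (hΦ a y z x).2.2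
    have h2 := (hΦ a y x z).2.1
    rw [show Φ a y z x = Φ a x y z by linarith]
  have expand : (∑ p, ∑ q, ∑ r,
      asym4 (fun a' b' c' d' => ∑ s, ∑ t, Ψ a' b' s t * Φ c' d' s t) i p q r
        * Φ a p q r)
      = ∑ p, ∑ q, ∑ r, (-2 * (Ψ i p q r * Φ a p q r) - 2 * (Ψ i q r p * Φ a p q r)
          - 2 * (Ψ i r p q * Φ a p q r)) := by
    refine Finset.sum_congr rfl fun p _ => Finset.sum_congr rfl fun q _ =>
      Finset.sum_congr rfl fun r _ => ?_
    rw [step1 p q r]; ring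
  rw [expand]
  simp only [Finset.sum_sub_distrib, ← Finset.mul_sum]
  rw [hS2, hS3, hT]
  ring

end Final

/-- if Ψ ∈ Λ²₇ ⊗_S Λ²₇ is tracefree, then the 4-form
`(ΨΦ)_{abcd} = Ψ_{[ab}{}^{pq} Φ_{cd]pq}` lies in Λ⁴₂₇; in particular its projection
onto Λ⁴₁ ⊕ Λ⁴₇ ⊕ Λ⁴₃₅ vanishes: `(ΨΦ)_{ipqr} Φ_{apqr} = 0`. -/
theorem PsiPhi_in_27 (Φ : Fin 8 → Fin 8 → Fin 8 → Fin 8 → ℝ)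
    (hΦ : Alt4 Φ) (hCayley : Cayley Φ)
    (Ψ : Fin 8 → Fin 8 → Fin 8 → Fin 8 → ℝ)
    (hA1 : ∀ a b c d, Ψ a b c d = -Ψ b a c d)
    (hA2 : ∀ a b c d, Ψ a b c d = -Ψ a b d c)
    (hS : ∀ a b c d, Ψ a b c d = Ψ c d a b)
    (hTr : (∑ a, ∑ b, Ψ a b a b) = 0)
    (h7L : ∀ a b c d, (1/2 : ℝ) * (∑ p, ∑ q, Φ a b p q * Ψ p q c d) = -3 * Ψ a b c d)
    (h7R : ∀ a b c d, (1/2 : ℝ) * (∑ p, ∑ q, Φ c d p q * Ψ a b p q) = -3 * Ψ a b c d) :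
    ∀ i a : Fin 8,
      (∑ p, ∑ q, ∑ r,
        asym4 (fun a' b' c' d' => ∑ s, ∑ t, Ψ a' b' s t * Φ c' d' s t) i p q r
          * Φ a p q r) = 0 := by
  intro i a
  exact main hΦ hCayley hA1 hA2 hS hTr h7L h7R i a
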